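/- Let A and B be real symmetric n×n matrices. Then I_≻(A,B) ≠ ∅ (i.e., there exists σ ∈ ℝ with A + σB positive definite) if and only if wᵀAw > 0 for every nonzero vector w with wᵀBw = 0. -/

import Mathlib

open Matrix

namespace Stmt0Aux

/-- Purely scalar core of the key inequality. -/
lemma key_scalar (fu fv b gu gv e : ℝ) (hu : 0 < gu) (hv : gv < 0)
    (H : ∀ t : ℝ, t ^ 2 + 2 * e * t + gu * gv = 0 →
      0 < fu * t ^ 2 + 2 * b * t * gu + fv * gu ^ 2) :
    fu * gv < fv * gu := by
  set D : ℝ := e ^ 2 - gu * gv with hD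
  have hDpos : 0 < D := by nlinarith [sq_nonneg e, mul_pos hu (neg_pos.2 hv)]
  have hsq2 : Real.sqrt D ^ 2 = D := Real.sq_sqrt hDpos.le
  have hsqpos : 0 < Real.sqrt D := Real.sqrt_pos.2 hDpos
  set sq : ℝ := Real.sqrt D
  set t₁ : ℝ := -e - sq with ht₁
  set t₂ : ℝ := -e + sq with ht₂
  have hT1 : t₁ ^ 2 + 2 * e * t₁ + gu * gv = 0 := by rw [ht₁]; nlinarith [hsq2]
  have hT2 : t₂ ^ 2 + 2 * e * t₂ + gu * gv = 0 := by rw [ht₂]; nlinarith [hsq2]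
  have ht12 : t₁ * t₂ = gu * gv := by rw [ht₁, ht₂]; nlinarith [hsq2]
  have htlt : t₁ < t₂ := by rw [ht₁, ht₂]; linarith
  have hprod : t₁ * t₂ < 0 := by rw [ht12]; exact mul_neg_of_pos_of_neg hu hv
  have ht2pos : 0 < t₂ := by by_contra h; push_neg at h; nlinarith
  have ht1neg : t₁ < 0 := by by_contra h; push_neg at h; nlinarith
  have hq1 := H t₁ hT1
  have hq2 := H t₂ hT2
  have hsum : 0 < t₂ * (fu * t₁ ^ 2 + 2 * b * t₁ * gu + fv * gu ^ 2)
      + (-t₁) * (fu * t₂ ^ 2 + 2 * b * t₂ * gu + fv * gu ^ 2) :=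
    add_pos (mul_pos ht2pos hq1) (mul_pos (neg_pos.2 ht1neg) hq2)
  have hid : t₂ * (fu * t₁ ^ 2 + 2 * b * t₁ * gu + fv * gu ^ 2)
      + (-t₁) * (fu * t₂ ^ 2 + 2 * b * t₂ * gu + fv * gu ^ 2)
      = (t₂ - t₁) * gu * (fv * gu - fu * gv) := by
    linear_combination (fu * (t₁ - t₂)) * ht12
  rw [hid] at hsum
  have h5 : 0 < (t₂ - t₁) * gu := mul_pos (by linarith) hu
  nlinarith [hsum, h5]

variable {n : ℕ}

lemma quad_cont (A : Matrix (Fin n) (Fin n) ℝ) :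
    Continuous fun w : Fin n → ℝ => w ⬝ᵥ A *ᵥ w := by
  simp only [dotProduct, mulVec]; fun_prop

lemma symm_dot {A : Matrix (Fin n) (Fin n) ℝ} (hA : A.IsSymm) (u v : Fin n → ℝ) :
    v ⬝ᵥ A *ᵥ u = u ⬝ᵥ A *ᵥ v := by
  rw [dotProduct_mulVec, ← mulVec_transpose, hA.eq, dotProduct_comm]

lemma quad_smul (A : Matrix (Fin n) (Fin n) ℝ) (c : ℝ) (w : Fin n → ℝ) :
    (c • w) ⬝ᵥ A *ᵥ (c • w) = c ^ 2 * (w ⬝ᵥ A *ᵥ w) := by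
  rw [smul_dotProduct, mulVec_smul, dotProduct_smul, smul_eq_mul, smul_eq_mul]; ring

lemma quad_expand (A : Matrix (Fin n) (Fin n) ℝ) (u v : Fin n → ℝ) (s t : ℝ) :
    (s • u + t • v) ⬝ᵥ A *ᵥ (s • u + t • v) =
      s ^ 2 * (u ⬝ᵥ A *ᵥ u) + s * t * (u ⬝ᵥ A *ᵥ v) + s * t * (v ⬝ᵥ A *ᵥ u)
        + t ^ 2 * (v ⬝ᵥ A *ᵥ v) := by
  rw [mulVec_add, add_dotProduct, dotProduct_add, dotProduct_add, mulVec_smul, mulVec_smul,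
    smul_dotProduct, smul_dotProduct, dotProduct_smul, dotProduct_smul, dotProduct_smul,
    dotProduct_smul]
  simp only [smul_dotProduct, dotProduct_smul, smul_eq_mul]; ring

lemma quad_sigma (A B : Matrix (Fin n) (Fin n) ℝ) (σ : ℝ) (w : Fin n → ℝ) :
    w ⬝ᵥ (A + σ • B) *ᵥ w = w ⬝ᵥ A *ᵥ w + σ * (w ⬝ᵥ B *ᵥ w) := by
  rw [add_mulVec, dotProduct_add, smul_mulVec, dotProduct_smul, smul_eq_mul]

lemma quad_neg (B : Matrix (Fin n) (Fin n) ℝ) (w : Fin n → ℝ) :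
    w ⬝ᵥ (-B) *ᵥ w = -(w ⬝ᵥ B *ᵥ w) := by
  rw [neg_mulVec, dotProduct_neg]

lemma isHermitian_of_isSymm {A : Matrix (Fin n) (Fin n) ℝ} (hA : A.IsSymm) :
    A.IsHermitian := by
  rw [Matrix.IsHermitian]
  ext i j
  rw [conjTranspose_apply, star_trivial]
  exact hA.apply i j

lemma ne_zero_of_norm_one {w : Fin n → ℝ} (h : ‖w‖ = 1) : w ≠ 0 := by
  intro h0
  rw [h0, norm_zero] at h
  exact one_ne_zero h.symm

/-- Matrix version of the key inequality. -/
lemma key {A B : Matrix (Fin n) (Fin n) ℝ} (hA : A.IsSymm) (hB : B.IsSymm)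
    (H : ∀ w : Fin n → ℝ, w ≠ 0 → w ⬝ᵥ B *ᵥ w = 0 → 0 < w ⬝ᵥ A *ᵥ w)
    {u v : Fin n → ℝ} (hu : 0 < u ⬝ᵥ B *ᵥ u) (hv : v ⬝ᵥ B *ᵥ v < 0) :
    (u ⬝ᵥ A *ᵥ u) * (v ⬝ᵥ B *ᵥ v) < (v ⬝ᵥ A *ᵥ v) * (u ⬝ᵥ B *ᵥ u) := by
  apply key_scalar _ _ (u ⬝ᵥ A *ᵥ v) _ _ (u ⬝ᵥ B *ᵥ v) hu hv
  intro t ht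
  have hwne : (t • u + (u ⬝ᵥ B *ᵥ u) • v) ≠ 0 := by
    intro hw
    have hveq : (u ⬝ᵥ B *ᵥ u) • v = (-t) • u := by
      rw [neg_smul]
      exact eq_neg_of_add_eq_zero_left (by rwa [add_comm] at hw)
    have h1 : ((u ⬝ᵥ B *ᵥ u) • v) ⬝ᵥ B *ᵥ ((u ⬝ᵥ B *ᵥ u) • v)
        = (u ⬝ᵥ B *ᵥ u) ^ 2 * (v ⬝ᵥ B *ᵥ v) := quad_smul B _ v
    have h2 : ((-t) • u) ⬝ᵥ B *ᵥ ((-t) • u) = (-t) ^ 2 * (u ⬝ᵥ B *ᵥ u) := quad_smul B _ u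
    rw [hveq, h2] at h1
    have e1 : 0 ≤ (-t) ^ 2 * (u ⬝ᵥ B *ᵥ u) := mul_nonneg (sq_nonneg _) hu.le
    have e2 : (u ⬝ᵥ B *ᵥ u) ^ 2 * (v ⬝ᵥ B *ᵥ v) < 0 :=
      mul_neg_of_pos_of_neg (pow_pos hu 2) hv
    linarith [h1, e1, e2]
  have hgz : (t • u + (u ⬝ᵥ B *ᵥ u) • v) ⬝ᵥ B *ᵥ (t • u + (u ⬝ᵥ B *ᵥ u) • v) = 0 := by
    rw [quad_expand, symm_dot hB u v]
    linear_combination (u ⬝ᵥ B *ᵥ u) * ht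
  have hpos := H _ hwne hgz
  rw [quad_expand, symm_dot hA u v] at hpos
  linarith

/-- Attainment of the infimum of `-f/g` over the part of the sphere where `g < 0`. -/
lemma inf_att (A B : Matrix (Fin n) (Fin n) ℝ)
    (H : ∀ w : Fin n → ℝ, w ≠ 0 → w ⬝ᵥ B *ᵥ w = 0 → 0 < w ⬝ᵥ A *ᵥ w)
    (v₀ : Fin n → ℝ) (hv₀n : ‖v₀‖ = 1) (hv₀ : v₀ ⬝ᵥ B *ᵥ v₀ < 0) :
    ∃ v : Fin n → ℝ, ‖v‖ = 1 ∧ v ⬝ᵥ B *ᵥ v < 0 ∧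
      ∀ v' : Fin n → ℝ, ‖v'‖ = 1 → v' ⬝ᵥ B *ᵥ v' < 0 →
        -(v ⬝ᵥ A *ᵥ v) / (v ⬝ᵥ B *ᵥ v) ≤ -(v' ⬝ᵥ A *ᵥ v') / (v' ⬝ᵥ B *ᵥ v') := by
  set f : (Fin n → ℝ) → ℝ := fun w => w ⬝ᵥ A *ᵥ w with hf
  set g : (Fin n → ℝ) → ℝ := fun w => w ⬝ᵥ B *ᵥ w with hg
  have hfc : Continuous f := quad_cont A
  have hgc : Continuous g := quad_cont B
  set b₀ : ℝ := -f v₀ / g v₀ with hb₀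
  set K : Set (Fin n → ℝ) := {v | ‖v‖ = 1 ∧ g v ≤ 0 ∧ f v + b₀ * g v ≤ 0} with hK
  have hKcl : IsClosed K := by
    apply IsClosed.inter
    · exact isClosed_eq continuous_norm continuous_const
    · exact IsClosed.inter (isClosed_le hgc continuous_const)
        (isClosed_le (hfc.add (continuous_const.mul hgc)) continuous_const)
  have hKsub : K ⊆ Metric.sphere (0 : Fin n → ℝ) 1 := fun v hv =>
    mem_sphere_zero_iff_norm.2 hv.1
  have hKcp : IsCompact K :=
    IsCompact.of_isClosed_subset (isCompact_sphere 0 1) hKcl hKsub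
  have hv₀K : v₀ ∈ K := by
    refine ⟨hv₀n, hv₀.le, ?_⟩
    rw [hb₀, div_mul_cancel₀ _ hv₀.ne]
    simp
  have hKneg : ∀ v ∈ K, g v < 0 := by
    intro v hv
    rcases lt_or_eq_of_le hv.2.1 with h | h
    · exact h
    · exfalso
      have hvne : v ≠ 0 := ne_zero_of_norm_one hv.1
      have hfv : 0 < f v := H v hvne h
      have h3 := hv.2.2
      rw [h, mul_zero, add_zero] at h3
      linarith
  have hφc : ContinuousOn (fun v => -f v / g v) K :=
    ContinuousOn.div (hfc.neg.continuousOn) (hgc.continuousOn)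
      (fun v hv => (hKneg v hv).ne)
  obtain ⟨v₁, hv₁K, hmin⟩ := hKcp.exists_isMinOn ⟨v₀, hv₀K⟩ hφc
  rw [isMinOn_iff] at hmin
  refine ⟨v₁, hv₁K.1, hKneg v₁ hv₁K, ?_⟩
  intro v' h1 h2
  by_cases hc : f v' + b₀ * g v' ≤ 0
  · exact hmin v' ⟨h1, h2.le, hc⟩
  · push_neg at hc
    have hb : b₀ < -f v' / g v' := by
      rw [lt_div_iff_of_neg h2]
      linarith
    exact le_of_lt (lt_of_le_of_lt (hmin v₀ hv₀K) hb)

end Stmt0Aux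

open Stmt0Aux

/-- `I_≻(A,B) ≠ ∅` iff `wᵀAw > 0` for every nonzero `w` with `wᵀBw = 0`. -/
theorem stmt_0 {n : ℕ} (A B : Matrix (Fin n) (Fin n) ℝ)
    (hA : A.IsSymm) (hB : B.IsSymm) :
    (∃ σ : ℝ, (A + σ • B).PosDef) ↔
      ∀ w : Fin n → ℝ, w ≠ 0 → w ⬝ᵥ B *ᵥ w = 0 → 0 < w ⬝ᵥ A *ᵥ w := by
  constructor
  · rintro ⟨σ, hσ⟩ w hw hgw
    have := hσ.dotProduct_mulVec_pos hw
    rw [star_trivial, quad_sigma, hgw, mul_zero, add_zero] at this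
    exact this
  · intro H
    -- it suffices to find σ working on the unit sphere
    suffices hσ : ∃ σ : ℝ, ∀ u : Fin n → ℝ, ‖u‖ = 1 →
        0 < u ⬝ᵥ A *ᵥ u + σ * (u ⬝ᵥ B *ᵥ u) by
      obtain ⟨σ, h⟩ := hσ
      refine ⟨σ, PosDef.of_dotProduct_mulVec_pos (isHermitian_of_isSymm ?_) ?_⟩
      · rw [Matrix.IsSymm, transpose_add, transpose_smul, hA.eq, hB.eq]
      · intro x hx
        rw [star_trivial, quad_sigma]
        have hc : (0:ℝ) < ‖x‖ := norm_pos_iff.2 hx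
        have hnu : ‖(‖x‖⁻¹ • x)‖ = 1 := by
          rw [norm_smul, Real.norm_eq_abs, abs_inv, abs_of_pos hc, inv_mul_cancel₀ hc.ne']
        have h2 := h (‖x‖⁻¹ • x) hnu
        rw [quad_smul, quad_smul] at h2
        have h3 : 0 < (‖x‖⁻¹) ^ 2 * (x ⬝ᵥ A *ᵥ x + σ * (x ⬝ᵥ B *ᵥ x)) := by
          nlinarith [h2]
        have h4 : (0:ℝ) < (‖x‖⁻¹) ^ 2 := pow_pos (inv_pos.2 hc) 2
        by_contra hle
        push_neg at hle
        nlinarith [h3, h4]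
    by_cases hP : ∃ u : Fin n → ℝ, ‖u‖ = 1 ∧ 0 < u ⬝ᵥ B *ᵥ u
    · -- positive part nonempty: get maximizer of -f/g over it via `inf_att` with `-B`
      obtain ⟨u₀, hu₀n, hu₀⟩ := hP
      have H' : ∀ w : Fin n → ℝ, w ≠ 0 → w ⬝ᵥ (-B) *ᵥ w = 0 → 0 < w ⬝ᵥ A *ᵥ w := by
        intro w hw h0
        rw [quad_neg, neg_eq_zero] at h0
        exact H w hw h0
      obtain ⟨u₁, hu₁n, hu₁g', hu₁max'⟩ := inf_att A (-B) H' u₀ hu₀n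
        (by rw [quad_neg]; linarith)
      rw [quad_neg] at hu₁g'
      have hu₁g : 0 < u₁ ⬝ᵥ B *ᵥ u₁ := by linarith
      -- translate the max property
      have hu₁max : ∀ u' : Fin n → ℝ, ‖u'‖ = 1 → 0 < u' ⬝ᵥ B *ᵥ u' →
          -(u' ⬝ᵥ A *ᵥ u') / (u' ⬝ᵥ B *ᵥ u') ≤ -(u₁ ⬝ᵥ A *ᵥ u₁) / (u₁ ⬝ᵥ B *ᵥ u₁) := by
        intro u' h1 h2
        have := hu₁max' u' h1 (by rw [quad_neg]; linarith)
        rw [quad_neg, quad_neg, neg_div_neg_eq, neg_div_neg_eq] at this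
        rw [neg_div, neg_div]
        linarith
      by_cases hN : ∃ v : Fin n → ℝ, ‖v‖ = 1 ∧ v ⬝ᵥ B *ᵥ v < 0
      · obtain ⟨v₀, hv₀n, hv₀g⟩ := hN
        obtain ⟨v₁, hv₁n, hv₁g, hv₁min⟩ := inf_att A B H v₀ hv₀n hv₀g
        have hkey := key hA hB H hu₁g hv₁g
        have hab : -(u₁ ⬝ᵥ A *ᵥ u₁) / (u₁ ⬝ᵥ B *ᵥ u₁)
            < -(v₁ ⬝ᵥ A *ᵥ v₁) / (v₁ ⬝ᵥ B *ᵥ v₁) := by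
          have e : -(v₁ ⬝ᵥ A *ᵥ v₁) / (v₁ ⬝ᵥ B *ᵥ v₁)
              = (v₁ ⬝ᵥ A *ᵥ v₁) / -(v₁ ⬝ᵥ B *ᵥ v₁) := by
            rw [neg_div, div_neg]
          rw [e, div_lt_div_iff₀ hu₁g (neg_pos.2 hv₁g)]
          nlinarith [hkey]
        set σ : ℝ := (-(u₁ ⬝ᵥ A *ᵥ u₁) / (u₁ ⬝ᵥ B *ᵥ u₁)
          + -(v₁ ⬝ᵥ A *ᵥ v₁) / (v₁ ⬝ᵥ B *ᵥ v₁)) / 2 with hσdef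
        have haσ : -(u₁ ⬝ᵥ A *ᵥ u₁) / (u₁ ⬝ᵥ B *ᵥ u₁) < σ := by rw [hσdef]; linarith
        have hσb : σ < -(v₁ ⬝ᵥ A *ᵥ v₁) / (v₁ ⬝ᵥ B *ᵥ v₁) := by rw [hσdef]; linarith
        refine ⟨σ, fun w hw => ?_⟩
        rcases lt_trichotomy (w ⬝ᵥ B *ᵥ w) 0 with h | h | h
        · have hbw := hv₁min w hw h
          have hσw : σ < -(w ⬝ᵥ A *ᵥ w) / (w ⬝ᵥ B *ᵥ w) := lt_of_lt_of_le hσb hbw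
          rw [lt_div_iff_of_neg h] at hσw
          linarith
        · have := H w (ne_zero_of_norm_one hw) h
          rw [h, mul_zero]
          linarith
        · have haw := hu₁max w hw h
          have hσw : -(w ⬝ᵥ A *ᵥ w) / (w ⬝ᵥ B *ᵥ w) < σ := lt_of_le_of_lt haw haσ
          rw [div_lt_iff₀ h] at hσw
          linarith
      · push_neg at hN
        set σ : ℝ := -(u₁ ⬝ᵥ A *ᵥ u₁) / (u₁ ⬝ᵥ B *ᵥ u₁) + 1 with hσdef
        have haσ : -(u₁ ⬝ᵥ A *ᵥ u₁) / (u₁ ⬝ᵥ B *ᵥ u₁) < σ := by rw [hσdef]; linarith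
        refine ⟨σ, fun w hw => ?_⟩
        rcases lt_trichotomy (w ⬝ᵥ B *ᵥ w) 0 with h | h | h
        · exact absurd h (not_lt.2 (hN w hw))
        · have := H w (ne_zero_of_norm_one hw) h
          rw [h, mul_zero]
          linarith
        · have haw := hu₁max w hw h
          have hσw : -(w ⬝ᵥ A *ᵥ w) / (w ⬝ᵥ B *ᵥ w) < σ := lt_of_le_of_lt haw haσ
          rw [div_lt_iff₀ h] at hσw
          linarith
    · push_neg at hP
      by_cases hN : ∃ v : Fin n → ℝ, ‖v‖ = 1 ∧ v ⬝ᵥ B *ᵥ v < 0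
      · obtain ⟨v₀, hv₀n, hv₀g⟩ := hN
        obtain ⟨v₁, hv₁n, hv₁g, hv₁min⟩ := inf_att A B H v₀ hv₀n hv₀g
        set σ : ℝ := -(v₁ ⬝ᵥ A *ᵥ v₁) / (v₁ ⬝ᵥ B *ᵥ v₁) - 1 with hσdef
        have hσb : σ < -(v₁ ⬝ᵥ A *ᵥ v₁) / (v₁ ⬝ᵥ B *ᵥ v₁) := by rw [hσdef]; linarith
        refine ⟨σ, fun w hw => ?_⟩
        rcases lt_trichotomy (w ⬝ᵥ B *ᵥ w) 0 with h | h | h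
        · have hbw := hv₁min w hw h
          have hσw : σ < -(w ⬝ᵥ A *ᵥ w) / (w ⬝ᵥ B *ᵥ w) := lt_of_lt_of_le hσb hbw
          rw [lt_div_iff_of_neg h] at hσw
          linarith
        · have := H w (ne_zero_of_norm_one hw) h
          rw [h, mul_zero]
          linarith
        · exact absurd (hP w hw) (not_le.2 h)
      · push_neg at hN
        refine ⟨0, fun w hw => ?_⟩
        have hle := hP w hw
        have hge := hN w hw
        have h0 : w ⬝ᵥ B *ᵥ w = 0 := le_antisymm hle hge
        have := H w (ne_zero_of_norm_one hw) h0
        rw [h0, mul_zero]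
        linarith
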